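/- Fix integers k ≥ 4 and ℓ ≥ 2, draw ℓ i.i.d. uniform sign vectors ω₁, …, ω_ℓ ∈ (Fin k → Bool), with X_j the number of true coordinates of ω_j, and let J be the MIDDLE-HEAVY selected index. Then P(X_J = 0) = (1/2)·(2^{1−k})^ℓ, P(X_J = 1) = (1/2)·(β^ℓ − (2^{1−k})^ℓ), and P(X_J ≥ 2) = 1 − (1/2)·β^ℓ, where β = (k+1)/2^{k−1}; i.e. the MIDDLE-HEAVY projected type frequencies are p₀ = s_AS^ℓ/2, p₁ = (β^ℓ − s_AS^ℓ)/2, p₂ = 1 − β^ℓ/2. -/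

import Mathlib

/-- Number of positive literals (true coordinates) of a sign vector. -/
def numPos (k : ℕ) (ω : Fin k → Bool) : ℕ :=
  (Finset.univ.filter fun i => ω i = true).card

/-- The class EDGE: `X = 1` or `X = k-1`. -/
abbrev InEDGE (k x : ℕ) : Prop := x = 1 ∨ x = k - 1

/-- The class MID: `2 ≤ X ≤ k-2`. -/
abbrev InMID (k x : ℕ) : Prop := 2 ≤ x ∧ x ≤ k - 2

/-- The MIDDLE-HEAVY selection rule: select the least index whose clause lies in MID,
if any; otherwise the least index in EDGE, if any; otherwise the least index. -/
def selectMH (k ℓ : ℕ) (hℓ : 0 < ℓ) (ωs : Fin ℓ → Fin k → Bool) : Fin ℓ :=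
  let mids : Finset (Fin ℓ) := Finset.univ.filter fun j => InMID k (numPos k (ωs j))
  let edges : Finset (Fin ℓ) := Finset.univ.filter fun j => InEDGE k (numPos k (ωs j))
  if h : mids.Nonempty then mids.min' h
  else if h2 : edges.Nonempty then edges.min' h2
  else ⟨0, hℓ⟩

section Aux

variable {k ℓ : ℕ}

lemma numPos_le (ω : Fin k → Bool) : numPos k ω ≤ k := by
  simpa [numPos] using
    Finset.card_filter_le (Finset.univ : Finset (Fin k)) (fun i => ω i = true)

lemma numPos_eq_zero_iff (ω : Fin k → Bool) :
    numPos k ω = 0 ↔ ω = fun _ => false := by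
  constructor
  · intro h
    funext i
    rw [numPos, Finset.card_eq_zero, Finset.filter_eq_empty_iff] at h
    have := h (Finset.mem_univ i)
    simpa using this
  · intro h; subst h; simp [numPos]

lemma numPos_not (ω : Fin k → Bool) :
    numPos k (fun i => !(ω i)) = k - numPos k ω := by
  have h1 : (Finset.univ.filter fun i => (!(ω i)) = true)
      = Finset.univ \ (Finset.univ.filter fun i => ω i = true) := by
    ext i; by_cases h : ω i <;> simp [h]
  simp only [numPos]
  rw [h1, Finset.card_sdiff, Finset.inter_univ, Finset.card_univ, Fintype.card_fin]

/-! ### Selection helper lemmas -/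

lemma selectMH_of_mids (hℓ0 : 0 < ℓ) (ωs : Fin ℓ → Fin k → Bool)
    (h : (Finset.univ.filter fun j => InMID k (numPos k (ωs j))).Nonempty) :
    selectMH k ℓ hℓ0 ωs = (Finset.univ.filter fun j => InMID k (numPos k (ωs j))).min' h := by
  simp only [selectMH]
  rw [dif_pos h]

lemma selectMH_of_edges (hℓ0 : 0 < ℓ) (ωs : Fin ℓ → Fin k → Bool)
    (h1 : ∀ j, ¬ InMID k (numPos k (ωs j)))
    (h : (Finset.univ.filter fun j => InEDGE k (numPos k (ωs j))).Nonempty) :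
    selectMH k ℓ hℓ0 ωs = (Finset.univ.filter fun j => InEDGE k (numPos k (ωs j))).min' h := by
  have hm : ¬ (Finset.univ.filter fun j => InMID k (numPos k (ωs j))).Nonempty := by
    rintro ⟨j, hj⟩; exact h1 j (Finset.mem_filter.mp hj).2
  simp only [selectMH]
  rw [dif_neg hm, dif_pos h]

lemma selectMH_of_none (hℓ0 : 0 < ℓ) (ωs : Fin ℓ → Fin k → Bool)
    (h1 : ∀ j, ¬ InMID k (numPos k (ωs j)))
    (h2 : ∀ j, ¬ InEDGE k (numPos k (ωs j))) :
    selectMH k ℓ hℓ0 ωs = ⟨0, hℓ0⟩ := by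
  have hm : ¬ (Finset.univ.filter fun j => InMID k (numPos k (ωs j))).Nonempty := by
    rintro ⟨j, hj⟩; exact h1 j (Finset.mem_filter.mp hj).2
  have he : ¬ (Finset.univ.filter fun j => InEDGE k (numPos k (ωs j))).Nonempty := by
    rintro ⟨j, hj⟩; exact h2 j (Finset.mem_filter.mp hj).2
  simp only [selectMH]
  rw [dif_neg hm, dif_neg he]

lemma sel_mid (hℓ0 : 0 < ℓ) (ωs : Fin ℓ → Fin k → Bool)
    (h : ∃ j, InMID k (numPos k (ωs j))) :
    InMID k (numPos k (ωs (selectMH k ℓ hℓ0 ωs))) := by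
  obtain ⟨j, hj⟩ := h
  have hne : (Finset.univ.filter fun j => InMID k (numPos k (ωs j))).Nonempty :=
    ⟨j, Finset.mem_filter.mpr ⟨Finset.mem_univ j, hj⟩⟩
  rw [selectMH_of_mids hℓ0 ωs hne]
  exact (Finset.mem_filter.mp (Finset.min'_mem _ hne)).2

lemma sel_edge (hℓ0 : 0 < ℓ) (ωs : Fin ℓ → Fin k → Bool)
    (h1 : ∀ j, ¬ InMID k (numPos k (ωs j)))
    (h : ∃ j, InEDGE k (numPos k (ωs j))) :
    InEDGE k (numPos k (ωs (selectMH k ℓ hℓ0 ωs))) := by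
  obtain ⟨j, hj⟩ := h
  have hne : (Finset.univ.filter fun j => InEDGE k (numPos k (ωs j))).Nonempty :=
    ⟨j, Finset.mem_filter.mpr ⟨Finset.mem_univ j, hj⟩⟩
  rw [selectMH_of_edges hℓ0 ωs h1 hne]
  exact (Finset.mem_filter.mp (Finset.min'_mem _ hne)).2

/-! ### Event characterizations -/

lemma event0_iff (hk : 4 ≤ k) (hℓ0 : 0 < ℓ) (ωs : Fin ℓ → Fin k → Bool) :
    numPos k (ωs (selectMH k ℓ hℓ0 ωs)) = 0 ↔
      ∀ j, if j = (⟨0, hℓ0⟩ : Fin ℓ) then ωs j = fun _ => false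
           else numPos k (ωs j) = 0 ∨ numPos k (ωs j) = k := by
  constructor
  · intro h
    have h1 : ∀ j, ¬ InMID k (numPos k (ωs j)) := by
      intro j hj
      have hm := sel_mid hℓ0 ωs ⟨j, hj⟩
      rw [h] at hm
      simp only [InMID] at hm
      omega
    have h2 : ∀ j, ¬ InEDGE k (numPos k (ωs j)) := by
      intro j hj
      have he := sel_edge hℓ0 ωs h1 ⟨j, hj⟩
      rw [h] at he
      simp only [InEDGE] at he
      omega
    have hz := selectMH_of_none hℓ0 ωs h1 h2
    intro j
    split_ifs with hj
    · subst hj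
      rw [← numPos_eq_zero_iff]
      rw [hz] at h
      exact h
    · have hle := numPos_le (ωs j)
      have hm := h1 j
      have he := h2 j
      simp only [InMID, InEDGE] at hm he
      omega
  · intro h
    have hAS : ∀ j, numPos k (ωs j) = 0 ∨ numPos k (ωs j) = k := by
      intro j
      have hj := h j
      split_ifs at hj with hj0
      · left; exact (numPos_eq_zero_iff _).mpr hj
      · exact hj
    have h1 : ∀ j, ¬ InMID k (numPos k (ωs j)) := by
      intro j hm
      obtain ⟨hm1, hm2⟩ := hm
      have := hAS j
      omega
    have h2 : ∀ j, ¬ InEDGE k (numPos k (ωs j)) := by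
      intro j he
      have := hAS j
      rcases he with he | he <;> omega
    rw [selectMH_of_none hℓ0 ωs h1 h2]
    have h0 := h (⟨0, hℓ0⟩ : Fin ℓ)
    rw [if_pos rfl] at h0
    exact (numPos_eq_zero_iff _).mpr h0

lemma event1_iff (hk : 4 ≤ k) (hℓ0 : 0 < ℓ) (ωs : Fin ℓ → Fin k → Bool) :
    (numPos k (ωs (selectMH k ℓ hℓ0 ωs)) = 1 ∨
        numPos k (ωs (selectMH k ℓ hℓ0 ωs)) = k - 1)
      ↔ (∀ j, ¬ InMID k (numPos k (ωs j))) ∧ (∃ j, InEDGE k (numPos k (ωs j))) := by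
  constructor
  · intro h
    have h1 : ∀ j, ¬ InMID k (numPos k (ωs j)) := by
      intro j hj
      have hm := sel_mid hℓ0 ωs ⟨j, hj⟩
      obtain ⟨hm1, hm2⟩ := hm
      rcases h with h | h <;> omega
    refine ⟨h1, ?_⟩
    by_contra hne
    push_neg at hne
    have := hne (selectMH k ℓ hℓ0 ωs)
    rcases h with h | h <;> omega
  · rintro ⟨h1, he⟩
    exact sel_edge hℓ0 ωs h1 he

lemma eventNM_iff (hk : 4 ≤ k) (hℓ0 : 0 < ℓ) (ωs : Fin ℓ → Fin k → Bool) :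
    (∀ j, ¬ InMID k (numPos k (ωs j))) ↔
      ((numPos k (ωs (selectMH k ℓ hℓ0 ωs)) = 1 ∨
          numPos k (ωs (selectMH k ℓ hℓ0 ωs)) = k - 1) ∨
        ∀ j, numPos k (ωs j) = 0 ∨ numPos k (ωs j) = k) := by
  constructor
  · intro h1
    by_cases he : ∃ j, InEDGE k (numPos k (ωs j))
    · left; exact sel_edge hℓ0 ωs h1 he
    · right
      intro j
      have hm := h1 j
      have hee : ¬ InEDGE k (numPos k (ωs j)) := fun hx => he ⟨j, hx⟩
      have hle := numPos_le (ωs j)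
      simp only [InMID, InEDGE] at hm hee
      omega
  · intro h
    rcases h with h | h
    · exact ((event1_iff hk hℓ0 ωs).mp h).1
    · intro j hm
      obtain ⟨hm1, hm2⟩ := hm
      have := h j
      omega

/-! ### Negation symmetry -/

lemma selectMH_neg (hk : 4 ≤ k) (hℓ0 : 0 < ℓ) (ωs : Fin ℓ → Fin k → Bool) :
    selectMH k ℓ hℓ0 (fun j i => !(ωs j i)) = selectMH k ℓ hℓ0 ωs := by
  have hmid : (Finset.univ.filter fun j => InMID k (numPos k (fun i => !(ωs j i))))
      = Finset.univ.filter fun j => InMID k (numPos k (ωs j)) := by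
    apply Finset.filter_congr
    intro j _
    have hle := numPos_le (ωs j)
    rw [numPos_not]
    simp only [InMID]
    omega
  have hedge : (Finset.univ.filter fun j => InEDGE k (numPos k (fun i => !(ωs j i))))
      = Finset.univ.filter fun j => InEDGE k (numPos k (ωs j)) := by
    apply Finset.filter_congr
    intro j _
    have hle := numPos_le (ωs j)
    rw [numPos_not]
    simp only [InEDGE]
    omega
  simp only [selectMH]
  simp only [hmid, hedge]

lemma card_event1_eq (hk : 4 ≤ k) (hℓ0 : 0 < ℓ) :
    Nat.card {ωs : Fin ℓ → Fin k → Bool // numPos k (ωs (selectMH k ℓ hℓ0 ωs)) = 1}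
      = Nat.card {ωs : Fin ℓ → Fin k → Bool //
          numPos k (ωs (selectMH k ℓ hℓ0 ωs)) = k - 1} := by
  apply Nat.card_congr
  refine Equiv.subtypeEquiv (α := Fin ℓ → Fin k → Bool)
    ⟨fun ωs j i => !(ωs j i), fun ωs j i => !(ωs j i),
      fun ωs => by funext j i; simp, fun ωs => by funext j i; simp⟩ ?_
  intro ωs
  simp only [Equiv.coe_fn_mk]
  rw [selectMH_neg hk hℓ0 ωs]
  show numPos k (ωs (selectMH k ℓ hℓ0 ωs)) = 1 ↔
    numPos k (fun i => !(ωs (selectMH k ℓ hℓ0 ωs) i)) = k - 1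
  rw [numPos_not]
  have hle := numPos_le (ωs (selectMH k ℓ hℓ0 ωs))
  omega

/-! ### Counting lemmas -/

lemma nc_filter {α : Type*} [Fintype α] (p : α → Prop) [DecidablePred p] :
    Nat.card {x // p x} = (Finset.univ.filter p).card := by
  rw [Nat.card_eq_fintype_card, Fintype.card_subtype]

def boolFunEquivFinset (k : ℕ) : (Fin k → Bool) ≃ Finset (Fin k) where
  toFun ω := Finset.univ.filter fun i => ω i = true
  invFun s := fun i => decide (i ∈ s)
  left_inv ω := by funext i; by_cases h : ω i <;> simp [h]
  right_inv s := by ext i; simp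

lemma card_numPos_eq (m : ℕ) :
    Nat.card {ω : Fin k → Bool // numPos k ω = m} = k.choose m := by
  rw [Nat.card_congr (Equiv.subtypeEquiv (p := fun ω : Fin k → Bool => numPos k ω = m)
    (q := fun s : Finset (Fin k) => s.card = m)
    (boolFunEquivFinset k) (fun ω => Iff.rfl))]
  rw [Nat.card_eq_fintype_card, Fintype.card_finset_len, Fintype.card_fin]

lemma fcard_numPos (m : ℕ) :
    (Finset.univ.filter fun ω : Fin k → Bool => numPos k ω = m).card = k.choose m := by
  rw [← nc_filter, card_numPos_eq]

lemma card_AS (hk : 4 ≤ k) :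
    Nat.card {ω : Fin k → Bool // numPos k ω = 0 ∨ numPos k ω = k} = 2 := by
  rw [nc_filter, Finset.filter_or,
    Finset.card_union_of_disjoint (Finset.disjoint_left.mpr (by
      intro ω h1 h2
      simp only [Finset.mem_filter] at h1 h2
      omega)),
    fcard_numPos, fcard_numPos, Nat.choose_zero_right, Nat.choose_self]

lemma card_NM (hk : 4 ≤ k) :
    Nat.card {ω : Fin k → Bool // ¬ InMID k (numPos k ω)} = 2 * k + 2 := by
  have he : ∀ ω : Fin k → Bool, (¬ InMID k (numPos k ω)) ↔
      (numPos k ω = 0 ∨ numPos k ω = 1 ∨ numPos k ω = k - 1 ∨ numPos k ω = k) := by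
    intro ω
    have := numPos_le ω
    simp only [InMID]
    omega
  rw [Nat.card_congr (Equiv.subtypeEquivRight he), nc_filter,
    Finset.filter_or, Finset.filter_or, Finset.filter_or]
  rw [Finset.card_union_of_disjoint (Finset.disjoint_left.mpr (by
      intro ω h1 h2
      simp only [Finset.mem_union, Finset.mem_filter] at h1 h2
      omega)),
    Finset.card_union_of_disjoint (Finset.disjoint_left.mpr (by
      intro ω h1 h2
      simp only [Finset.mem_union, Finset.mem_filter] at h1 h2
      omega)),
    Finset.card_union_of_disjoint (Finset.disjoint_left.mpr (by
      intro ω h1 h2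
      simp only [Finset.mem_union, Finset.mem_filter] at h1 h2
      omega))]
  rw [fcard_numPos, fcard_numPos, fcard_numPos, fcard_numPos,
    Nat.choose_zero_right, Nat.choose_one_right, Nat.choose_self]
  have hsym : k.choose (k - 1) = k := by
    have := Nat.choose_symm (show 1 ≤ k by omega)
    rw [Nat.choose_one_right] at this
    exact this
  omega

lemma nat_card_pi (p : Fin ℓ → (Fin k → Bool) → Prop) :
    Nat.card {ωs : Fin ℓ → Fin k → Bool // ∀ j, p j (ωs j)}
      = ∏ j, Nat.card {ω : Fin k → Bool // p j ω} := by
  rw [Nat.card_congr Equiv.subtypePiEquivPi, Nat.card_pi]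

lemma count0 (hk : 4 ≤ k) (hℓ0 : 0 < ℓ) :
    Nat.card {ωs : Fin ℓ → Fin k → Bool //
      numPos k (ωs (selectMH k ℓ hℓ0 ωs)) = 0} = 2 ^ (ℓ - 1) := by
  rw [Nat.card_congr (Equiv.subtypeEquivRight (event0_iff hk hℓ0))]
  rw [nat_card_pi (p := fun j ω => if j = (⟨0, hℓ0⟩ : Fin ℓ) then ω = fun _ => false
    else numPos k ω = 0 ∨ numPos k ω = k)]
  have hterm : ∀ j : Fin ℓ,
      Nat.card {ω : Fin k → Bool //
        if j = (⟨0, hℓ0⟩ : Fin ℓ) then ω = fun _ => false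
        else numPos k ω = 0 ∨ numPos k ω = k}
      = if j = (⟨0, hℓ0⟩ : Fin ℓ) then 1 else 2 := by
    intro j
    by_cases hj : j = (⟨0, hℓ0⟩ : Fin ℓ)
    · simp only [if_pos hj]
      rw [nc_filter]
      simp [Finset.filter_eq']
    · simp only [if_neg hj]
      exact card_AS hk
  rw [Finset.prod_congr rfl (fun j _ => hterm j)]
  rw [← Finset.mul_prod_erase Finset.univ _ (Finset.mem_univ (⟨0, hℓ0⟩ : Fin ℓ)),
    if_pos rfl, one_mul]
  rw [Finset.prod_congr rfl (fun j hj => if_neg (Finset.mem_erase.mp hj).1),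
    Finset.prod_const, Finset.card_erase_of_mem (Finset.mem_univ _),
    Finset.card_univ, Fintype.card_fin]

lemma countAS (hk : 4 ≤ k) :
    Nat.card {ωs : Fin ℓ → Fin k → Bool //
      ∀ j, numPos k (ωs j) = 0 ∨ numPos k (ωs j) = k} = 2 ^ ℓ := by
  rw [nat_card_pi (p := fun _ ω => numPos k ω = 0 ∨ numPos k ω = k)]
  rw [Finset.prod_congr rfl (fun j _ => card_AS hk), Finset.prod_const,
    Finset.card_univ, Fintype.card_fin]

lemma countNM (hk : 4 ≤ k) :
    Nat.card {ωs : Fin ℓ → Fin k → Bool //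
      ∀ j, ¬ InMID k (numPos k (ωs j))} = (2 * k + 2) ^ ℓ := by
  rw [nat_card_pi (p := fun _ ω => ¬ InMID k (numPos k ω))]
  rw [Finset.prod_congr rfl (fun j _ => card_NM hk), Finset.prod_const,
    Finset.card_univ, Fintype.card_fin]

lemma count_sum (hk : 4 ≤ k) (hℓ0 : 0 < ℓ) :
    Nat.card {ωs : Fin ℓ → Fin k → Bool // numPos k (ωs (selectMH k ℓ hℓ0 ωs)) = 1}
      + Nat.card {ωs : Fin ℓ → Fin k → Bool // numPos k (ωs (selectMH k ℓ hℓ0 ωs)) = k - 1}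
      + 2 ^ ℓ = (2 * k + 2) ^ ℓ := by
  classical
  rw [← countAS (ℓ := ℓ) hk, ← countNM (ℓ := ℓ) hk]
  rw [nc_filter, nc_filter, nc_filter, nc_filter]
  have hd1 : Disjoint
      (Finset.univ.filter fun ωs : Fin ℓ → Fin k → Bool =>
        numPos k (ωs (selectMH k ℓ hℓ0 ωs)) = 1)
      (Finset.univ.filter fun ωs : Fin ℓ → Fin k → Bool =>
        numPos k (ωs (selectMH k ℓ hℓ0 ωs)) = k - 1) := by
    apply Finset.disjoint_left.mpr
    intro ωs h1 h2
    simp only [Finset.mem_filter] at h1 h2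
    omega
  have hd2 : Disjoint
      ((Finset.univ.filter fun ωs : Fin ℓ → Fin k → Bool =>
          numPos k (ωs (selectMH k ℓ hℓ0 ωs)) = 1)
        ∪ (Finset.univ.filter fun ωs : Fin ℓ → Fin k → Bool =>
          numPos k (ωs (selectMH k ℓ hℓ0 ωs)) = k - 1))
      (Finset.univ.filter fun ωs : Fin ℓ → Fin k → Bool =>
        ∀ j, numPos k (ωs j) = 0 ∨ numPos k (ωs j) = k) := by
    apply Finset.disjoint_left.mpr
    intro ωs h1 h2
    simp only [Finset.mem_union, Finset.mem_filter, Finset.mem_univ, true_and] at h1 h2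
    have := h2 (selectMH k ℓ hℓ0 ωs)
    omega
  rw [← Finset.card_union_of_disjoint hd1, ← Finset.card_union_of_disjoint hd2]
  congr 1
  ext ωs
  simp only [Finset.mem_union, Finset.mem_filter, Finset.mem_univ, true_and]
  exact (eventNM_iff hk hℓ0 ωs).symm

lemma count_total (hk : 4 ≤ k) (hℓ0 : 0 < ℓ) :
    Nat.card {ωs : Fin ℓ → Fin k → Bool // numPos k (ωs (selectMH k ℓ hℓ0 ωs)) = 0}
      + Nat.card {ωs : Fin ℓ → Fin k → Bool // numPos k (ωs (selectMH k ℓ hℓ0 ωs)) = 1}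
      + Nat.card {ωs : Fin ℓ → Fin k → Bool // 2 ≤ numPos k (ωs (selectMH k ℓ hℓ0 ωs))}
      = 2 ^ (k * ℓ) := by
  classical
  rw [nc_filter, nc_filter, nc_filter]
  have hd1 : Disjoint
      (Finset.univ.filter fun ωs : Fin ℓ → Fin k → Bool =>
        numPos k (ωs (selectMH k ℓ hℓ0 ωs)) = 0)
      (Finset.univ.filter fun ωs : Fin ℓ → Fin k → Bool =>
        numPos k (ωs (selectMH k ℓ hℓ0 ωs)) = 1) := by
    apply Finset.disjoint_left.mpr
    intro ωs h1 h2
    simp only [Finset.mem_filter] at h1 h2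
    omega
  have hd2 : Disjoint
      ((Finset.univ.filter fun ωs : Fin ℓ → Fin k → Bool =>
          numPos k (ωs (selectMH k ℓ hℓ0 ωs)) = 0)
        ∪ (Finset.univ.filter fun ωs : Fin ℓ → Fin k → Bool =>
          numPos k (ωs (selectMH k ℓ hℓ0 ωs)) = 1))
      (Finset.univ.filter fun ωs : Fin ℓ → Fin k → Bool =>
        2 ≤ numPos k (ωs (selectMH k ℓ hℓ0 ωs))) := by
    apply Finset.disjoint_left.mpr
    intro ωs h1 h2
    simp only [Finset.mem_union, Finset.mem_filter, Finset.mem_univ, true_and] at h1 h2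
    omega
  rw [← Finset.card_union_of_disjoint hd1, ← Finset.card_union_of_disjoint hd2]
  have hU : ((Finset.univ.filter fun ωs : Fin ℓ → Fin k → Bool =>
          numPos k (ωs (selectMH k ℓ hℓ0 ωs)) = 0)
        ∪ (Finset.univ.filter fun ωs : Fin ℓ → Fin k → Bool =>
          numPos k (ωs (selectMH k ℓ hℓ0 ωs)) = 1))
        ∪ (Finset.univ.filter fun ωs : Fin ℓ → Fin k → Bool =>
          2 ≤ numPos k (ωs (selectMH k ℓ hℓ0 ωs)))
      = Finset.univ := by
    ext ωs
    simp only [Finset.mem_union, Finset.mem_filter, Finset.mem_univ, true_and, iff_true]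
    omega
  rw [hU, Finset.card_univ]
  rw [Fintype.card_fun, Fintype.card_fun, Fintype.card_bool, Fintype.card_fin,
    Fintype.card_fin, ← pow_mul]

end Aux

/-- For `k ≥ 4`, `ℓ ≥ 2`, with `J` the MIDDLE-HEAVY selected index among
`ℓ` i.i.d. uniform sign vectors, `P(X_J = 0) = (1/2)(2^{1-k})^ℓ`,
`P(X_J = 1) = (1/2)(β^ℓ - (2^{1-k})^ℓ)` and `P(X_J ≥ 2) = 1 - (1/2)β^ℓ`,
where `β = (k+1)/2^{k-1}` (probabilities computed as the number of favourable tuples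
of sign vectors divided by `2^{kℓ}`). -/
theorem stmt13 (k ℓ : ℕ) (hk : 4 ≤ k) (hℓ : 2 ≤ ℓ) :
    ((Nat.card {ωs : Fin ℓ → Fin k → Bool //
            numPos k (ωs (selectMH k ℓ (by omega) ωs)) = 0} : ℝ) / 2 ^ (k * ℓ)
        = (1 / 2) * ((2 : ℝ) ^ ((1 : ℤ) - (k : ℤ))) ^ ℓ) ∧
    ((Nat.card {ωs : Fin ℓ → Fin k → Bool //
            numPos k (ωs (selectMH k ℓ (by omega) ωs)) = 1} : ℝ) / 2 ^ (k * ℓ)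
        = (1 / 2) * ((((k : ℝ) + 1) / 2 ^ (k - 1)) ^ ℓ
            - ((2 : ℝ) ^ ((1 : ℤ) - (k : ℤ))) ^ ℓ)) ∧
    ((Nat.card {ωs : Fin ℓ → Fin k → Bool //
            2 ≤ numPos k (ωs (selectMH k ℓ (by omega) ωs))} : ℝ) / 2 ^ (k * ℓ)
        = 1 - (1 / 2) * (((k : ℝ) + 1) / 2 ^ (k - 1)) ^ ℓ) := by
  have hℓ0 : 0 < ℓ := by omega
  have hN : (2 : ℝ) ^ (k * ℓ) ≠ 0 := by positivity
  have hz : ((2 : ℝ) ^ ((1 : ℤ) - (k : ℤ))) ^ ℓ = 2 ^ ℓ / 2 ^ (k * ℓ) := by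
    rw [zpow_sub₀ (by norm_num : (2 : ℝ) ≠ 0), zpow_one, zpow_natCast, div_pow, ← pow_mul]
  have h2k : (2 : ℝ) ^ k = 2 ^ (k - 1) * 2 := by
    rw [← pow_succ]; congr 1; omega
  have hβ : (((k : ℝ) + 1) / 2 ^ (k - 1)) ^ ℓ = (2 * (k : ℝ) + 2) ^ ℓ / 2 ^ (k * ℓ) := by
    have hb : ((k : ℝ) + 1) / 2 ^ (k - 1) = (2 * (k : ℝ) + 2) / 2 ^ k := by
      rw [h2k]
      have : (2 : ℝ) ^ (k - 1) ≠ 0 := by positivity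
      field_simp
    rw [hb, div_pow, ← pow_mul]
  have h2ℓ : (2 : ℝ) ^ ℓ = 2 ^ (ℓ - 1) * 2 := by
    rw [← pow_succ]; congr 1; omega
  -- counts
  have hc0 := count0 (k := k) (ℓ := ℓ) hk hℓ0
  have hc1 := count_sum (k := k) (ℓ := ℓ) hk hℓ0
  rw [← card_event1_eq hk hℓ0] at hc1
  have hct := count_total (k := k) (ℓ := ℓ) hk hℓ0
  set A0 := Nat.card {ωs : Fin ℓ → Fin k → Bool //
      numPos k (ωs (selectMH k ℓ hℓ0 ωs)) = 0} with hA0def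
  set A1 := Nat.card {ωs : Fin ℓ → Fin k → Bool //
      numPos k (ωs (selectMH k ℓ hℓ0 ωs)) = 1} with hA1def
  set A2 := Nat.card {ωs : Fin ℓ → Fin k → Bool //
      2 ≤ numPos k (ωs (selectMH k ℓ hℓ0 ωs))} with hA2def
  have hc0' : (A0 : ℝ) = 2 ^ (ℓ - 1) := by exact_mod_cast congrArg (Nat.cast : ℕ → ℝ) hc0
  have hc1' : (A1 : ℝ) + A1 + 2 ^ ℓ = (2 * (k : ℝ) + 2) ^ ℓ := by exact_mod_cast hc1
  have hct' : (A0 : ℝ) + A1 + A2 = 2 ^ (k * ℓ) := by exact_mod_cast hct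
  refine ⟨?_, ?_, ?_⟩
  · show (A0 : ℝ) / 2 ^ (k * ℓ) = (1 / 2) * ((2 : ℝ) ^ ((1 : ℤ) - (k : ℤ))) ^ ℓ
    rw [hc0', hz, h2ℓ]
    ring
  · show (A1 : ℝ) / 2 ^ (k * ℓ) = (1 / 2) * ((((k : ℝ) + 1) / 2 ^ (k - 1)) ^ ℓ
      - ((2 : ℝ) ^ ((1 : ℤ) - (k : ℤ))) ^ ℓ)
    rw [hβ, hz]
    have hA1 : (A1 : ℝ) = ((2 * (k : ℝ) + 2) ^ ℓ - 2 ^ ℓ) / 2 := by linarith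
    rw [hA1]
    ring
  · show (A2 : ℝ) / 2 ^ (k * ℓ) = 1 - (1 / 2) * (((k : ℝ) + 1) / 2 ^ (k - 1)) ^ ℓ
    rw [hβ]
    have hA2 : (A2 : ℝ) = 2 ^ (k * ℓ) - (2 * (k : ℝ) + 2) ^ ℓ / 2 := by
      rw [h2ℓ] at hc1'
      linarith
    rw [hA2]
    field_simp
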